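/- For all positive integers n, the product 2(2n+1)·C(2n,n) divides C(6n,3n)·C(3n,n). -/

import Mathlib

open Nat Finset

private lemma emult_fac_eq {p : ℕ} (hp : p.Prime) (m : ℕ) :
    emultiplicity p (m !) = ((m !).factorization p : ℕ∞) := by
  rw [← Nat.multiplicity_eq_factorization hp (factorial_ne_zero m)]
  exact (Nat.finiteMultiplicity_iff.2
    ⟨hp.ne_one, factorial_pos m⟩).emultiplicity_eq_multiplicity

private lemma v2_double (m : ℕ) :
    ((2 * m)!).factorization 2 = (m !).factorization 2 + m := by
  have h := Nat.Prime.emultiplicity_factorial_mul (n := m) prime_two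
  rw [emult_fac_eq prime_two, emult_fac_eq prime_two] at h
  exact_mod_cast h

private lemma v2_lt {m : ℕ} (hm : m ≠ 0) : (m !).factorization 2 < m := by
  have h := Nat.emultiplicity_two_factorial_lt hm
  rw [emult_fac_eq prime_two] at h
  exact_mod_cast h

private lemma fac_legendre {p : ℕ} (hp : p.Prime) {m b : ℕ} (h : Nat.log p m < b) :
    (m !).factorization p = ∑ i ∈ Finset.Ico 1 b, m / p ^ i := by
  have hh := hp.emultiplicity_factorial h
  rw [emult_fac_eq hp] at hh
  exact_mod_cast hh

private lemma residue_ineq {m r : ℕ} (hm : 3 ≤ m) (hr : r < m) :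
    (2 * r + 2) / m + 3 * r / m + 2 * r / m ≤ 6 * r / m + (r + 1) / m := by
  have hm0 : 0 < m := by omega
  rcases Nat.lt_or_ge (r + 1) m with h | h
  · -- r + 1 < m, so (r+1)/m = 0
    have h5 : (r + 1) / m = 0 := Nat.div_eq_of_lt h
    rcases Nat.lt_or_ge (2 * r + 2) m with ha | ha
    · -- all about superadditivity
      have h1 : (2 * r + 2) / m = 0 := Nat.div_eq_of_lt ha
      have h2 : 3 * r / m + 2 * r / m ≤ (3 * r + 2 * r) / m :=
        Nat.add_div_le_add_div _ _ _
      have h3 : (3 * r + 2 * r) / m ≤ 6 * r / m :=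
        Nat.div_le_div_right (by omega)
      omega
    · -- (2r+2)/m = 1
      have h1 : (2 * r + 2) / m = 1 := Nat.div_eq_of_lt_le (by omega) (by omega)
      rcases Nat.lt_or_ge (2 * r) m with hc | hc
      · -- 2r/m = 0
        have h2 : 2 * r / m = 0 := Nat.div_eq_of_lt hc
        rcases Nat.lt_or_ge (3 * r) m with hb | hb
        · have h3 : 3 * r / m = 0 := Nat.div_eq_of_lt hb
          have h4 : 1 ≤ 6 * r / m := (Nat.le_div_iff_mul_le hm0).2 (by omega)
          omega
        · have h3 : 3 * r / m = 1 := Nat.div_eq_of_lt_le (by omega) (by omega)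
          have h4 : 2 ≤ 6 * r / m := (Nat.le_div_iff_mul_le hm0).2 (by omega)
          omega
      · -- 2r/m = 1
        have h2 : 2 * r / m = 1 := Nat.div_eq_of_lt_le (by omega) (by omega)
        rcases Nat.lt_or_ge (3 * r) (2 * m) with hb | hb
        · have h3 : 3 * r / m = 1 := Nat.div_eq_of_lt_le (by omega) (by omega)
          have h4 : 3 ≤ 6 * r / m := (Nat.le_div_iff_mul_le hm0).2 (by omega)
          omega
        · have h3 : 3 * r / m = 2 := Nat.div_eq_of_lt_le (by omega) (by omega)
          have h4 : 4 ≤ 6 * r / m := (Nat.le_div_iff_mul_le hm0).2 (by omega)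
          omega
  · -- r + 1 = m
    have hrm : r + 1 = m := by omega
    have h1 : (2 * r + 2) / m = 2 := Nat.div_eq_of_lt_le (by omega) (by omega)
    have h2 : 3 * r / m = 2 := Nat.div_eq_of_lt_le (by omega) (by omega)
    have h3 : 2 * r / m = 1 := Nat.div_eq_of_lt_le (by omega) (by omega)
    have h5 : (r + 1) / m = 1 := by
      rw [hrm, Nat.div_self hm0]
    have h4 : 4 ≤ 6 * r / m := (Nat.le_div_iff_mul_le hm0).2 (by omega)
    omega

private lemma floor_ineq (n : ℕ) {m : ℕ} (hm : 3 ≤ m) :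
    (2 * n + 2) / m + 3 * n / m + 2 * n / m ≤ 6 * n / m + (n + 1) / m := by
  have hm0 : 0 < m := by omega
  obtain ⟨q, r, hr, hn⟩ : ∃ q r, r < m ∧ n = r + m * q :=
    ⟨n / m, n % m, Nat.mod_lt _ hm0, by
      rw [Nat.add_comm]; exact (Nat.div_add_mod n m).symm⟩
  subst hn
  have e1 : 2 * (r + m * q) + 2 = 2 * r + 2 + m * (2 * q) := by ring
  have e2 : 3 * (r + m * q) = 3 * r + m * (3 * q) := by ring
  have e3 : 2 * (r + m * q) = 2 * r + m * (2 * q) := by ring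
  have e4 : 6 * (r + m * q) = 6 * r + m * (6 * q) := by ring
  have e5 : r + m * q + 1 = r + 1 + m * q := by ring
  rw [e1, e2, e3, e4, e5, Nat.add_mul_div_left _ _ hm0, Nat.add_mul_div_left _ _ hm0,
    Nat.add_mul_div_left _ _ hm0, Nat.add_mul_div_left _ _ hm0, Nat.add_mul_div_left _ _ hm0]
  have := residue_ineq hm hr
  omega

private lemma key_dvd (n : ℕ) (hn : 0 < n) :
    (2 * n + 2)! * ((3 * n)! * (2 * n)!) ∣ (6 * n)! * (n + 1)! := by
  rw [← Nat.factorization_le_iff_dvd (by positivity) (by positivity),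
    Nat.factorization_mul (by positivity) (by positivity),
    Nat.factorization_mul (by positivity) (by positivity),
    Nat.factorization_mul (by positivity) (by positivity), Finsupp.le_def]
  intro p
  simp only [Finsupp.coe_add, Pi.add_apply]
  by_cases hp : p.Prime
  · by_cases hp2 : p = 2
    · subst hp2
      have d1 : ((2 * n + 2)!).factorization 2 = ((n + 1)!).factorization 2 + (n + 1) := by
        rw [show 2 * n + 2 = 2 * (n + 1) by ring, v2_double]
      have d2 : ((2 * n)!).factorization 2 = (n !).factorization 2 + n := v2_double n
      have d3 : ((6 * n)!).factorization 2 = ((3 * n)!).factorization 2 + 3 * n := by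
        rw [show 6 * n = 2 * (3 * n) by ring, v2_double]
      have hv := v2_lt (Nat.pos_iff_ne_zero.1 hn)
      omega
    · have hp3 : 3 ≤ p := by
        rcases hp.two_le.lt_or_eq with h | h
        · omega
        · omega
      have hb : ∀ m : ℕ, m ≤ 6 * n → Nat.log p m < 6 * n + 1 := fun m hm =>
        lt_of_le_of_lt (le_trans (Nat.log_le_self p m) hm) (by omega)
      rw [fac_legendre hp (hb _ (by omega)), fac_legendre hp (hb _ (by omega)),
        fac_legendre hp (hb _ (by omega)), fac_legendre hp (hb _ (by omega)),
        fac_legendre hp (hb _ (by omega)), ← Finset.sum_add_distrib,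
        ← Finset.sum_add_distrib, ← Finset.sum_add_distrib]
      apply Finset.sum_le_sum
      intro i hi
      have hi1 : 1 ≤ i := (Finset.mem_Ico.1 hi).1
      have hm : 3 ≤ p ^ i := le_trans hp3 (Nat.le_self_pow (by omega) p)
      have := floor_ineq n hm
      omega
  · simp [Nat.factorization_eq_zero_of_not_prime _ hp]

theorem sun_divisibility (n : ℕ) (hn : 0 < n) :
    2 * (2 * n + 1) * Nat.choose (2 * n) n ∣ Nat.choose (6 * n) (3 * n) * Nat.choose (3 * n) n := by
  have e1 : (6 * n).choose (3 * n) * (3 * n)! * (3 * n)! = (6 * n)! := by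
    have := Nat.choose_mul_factorial_mul_factorial (show 3 * n ≤ 6 * n by omega)
    simpa [show 6 * n - 3 * n = 3 * n by omega] using this
  have e2 : (3 * n).choose n * n ! * (2 * n)! = (3 * n)! := by
    have := Nat.choose_mul_factorial_mul_factorial (show n ≤ 3 * n by omega)
    simpa [show 3 * n - n = 2 * n by omega] using this
  have e3 : (2 * n).choose n * n ! * n ! = (2 * n)! := by
    have := Nat.choose_mul_factorial_mul_factorial (show n ≤ 2 * n by omega)
    simpa [show 2 * n - n = n by omega] using this
  have e4 : (2 * n + 2)! = (2 * n + 2) * ((2 * n + 1) * (2 * n)!) := by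
    rw [show 2 * n + 2 = (2 * n + 1) + 1 by ring, Nat.factorial_succ, Nat.factorial_succ]
  have e5 : (n + 1)! = (n + 1) * n ! := Nat.factorial_succ n
  have hK : 0 < n ! * n ! * (3 * n)! * (2 * n)! * (n + 1) := by positivity
  refine (Nat.mul_dvd_mul_iff_right hK).mp ?_
  have hL : 2 * (2 * n + 1) * Nat.choose (2 * n) n *
      (n ! * n ! * (3 * n)! * (2 * n)! * (n + 1)) = (2 * n + 2)! * ((3 * n)! * (2 * n)!) := by
    rw [e4, ← e3]; ring
  have hR : Nat.choose (6 * n) (3 * n) * Nat.choose (3 * n) n *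
      (n ! * n ! * (3 * n)! * (2 * n)! * (n + 1)) = (6 * n)! * (n + 1)! := by
    rw [← e1, ← e2, e5]; ring
  rw [hL, hR]
  exact key_dvd n hn
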